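/- Let G be a finite strictly competitive extensive game with perfect information, and let Γ^k(G) denote the result of k rounds of eliminating all weakly dominated strategies from the strategic form Γ(G). For each player i ∈ {1,2} and every k ≥ 0: if win_i(Γ^k(G)) = ∅, then lose_{-i}(Γ^k(G)) ∩ Γ^{k+2}_{-i}(G) = ∅. -/

import Mathlib

/-- A finite extensive game with perfect information: a finite rooted tree whose
leaves carry an outcome for each player and whose internal nodes carry the player
to move and a nonempty finite family of children. -/
inductive ExtGame (ι : Type) : Type where
  | leaf : (ι → ℝ) → ExtGame ι
  | node : ι → (m : ℕ) → (Fin (m + 1) → ExtGame ι) → ExtGame ι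

namespace ExtGame

variable {ι : Type}

/-- A strategy of player `i`: at every node where it is `i`'s turn, a choice of a child. -/
def Strategy (i : ι) : ExtGame ι → Type
  | .leaf _ => PUnit
  | .node j m children => (i = j → Fin (m + 1)) × ∀ c : Fin (m + 1), Strategy i (children c)

/-- The outcome (payoff vector) when every player follows his strategy. -/
def outcome : (G : ExtGame ι) → (∀ i, G.Strategy i) → ι → ℝ
  | .leaf o, _ => o
  | .node j _ children, σ =>
      outcome (children ((σ j).1 rfl)) (fun i => (σ i).2 ((σ j).1 rfl))

/-- Nodes of the game tree, identified by the path from the root. -/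
inductive Node : ExtGame ι → Type where
  | root (G : ExtGame ι) : Node G
  | child {j : ι} {m : ℕ} {children : Fin (m + 1) → ExtGame ι}
      (c : Fin (m + 1)) : Node (children c) → Node (.node j m children)

/-- The subgame rooted at a node. -/
def subgameAt : {G : ExtGame ι} → Node G → ExtGame ι
  | _, .root G => G
  | _, .child c v => subgameAt v

/-- The joint strategy of the subgame rooted at `v` induced by a joint strategy. -/
def restrictProfile : {G : ExtGame ι} → (∀ i, G.Strategy i) → (v : Node G) →
    ∀ i, (subgameAt v).Strategy i
  | _, σ, .root _ => σ
  | _, σ, .child c v => restrictProfile (fun i => (σ i).2 c) v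

/-- Nash equilibrium of (the strategic form of) an extensive game. -/
def NashEq [DecidableEq ι] (G : ExtGame ι) (σ : ∀ i, G.Strategy i) : Prop :=
  ∀ (i : ι) (t : G.Strategy i), G.outcome σ i ≥ G.outcome (Function.update σ i t) i

/-- Subgame perfect equilibrium: the induced joint strategy is a Nash equilibrium
in the subgame rooted at every node. -/
def SPE [DecidableEq ι] (G : ExtGame ι) (σ : ∀ i, G.Strategy i) : Prop :=
  ∀ v : Node G, (subgameAt v).NashEq (restrictProfile σ v)

/-- At the root (if it is a non-leaf), the player to move chooses a child whose
subgame outcome (under the induced strategies) is maximal for him. -/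
def BestAtRoot : (G : ExtGame ι) → (∀ i, G.Strategy i) → Prop
  | .leaf _, _ => True
  | .node j _ children, σ =>
      ∀ c, outcome (children ((σ j).1 rfl)) (fun i => (σ i).2 ((σ j).1 rfl)) j ≥
        outcome (children c) (fun i => (σ i).2 c) j

/-- The list of payoff vectors at the leaves of the game tree (one entry per leaf). -/
def leavesList : ExtGame ι → List (ι → ℝ)
  | .leaf o => [o]
  | .node _ _ children => (List.ofFn fun c => leavesList (children c)).flatten

/-- The game is without relevant ties: at every non-leaf node `u` with `turn(u) = i`,
the outcome function of player `i` is injective on the leaves of the subtree rooted at `u`. -/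
def NoRelevantTies : ExtGame ι → Prop
  | .leaf _ => True
  | .node j m children =>
      ((ExtGame.node j m children).leavesList.Pairwise fun o o' => o j ≠ o' j) ∧
      ∀ c, NoRelevantTies (children c)

/-- The player to move at a node (`none` if the node is a leaf). -/
def turnAt {G : ExtGame ι} (v : Node G) : Option ι :=
  match subgameAt v with
  | .leaf _ => none
  | .node j _ _ => some j

end ExtGame


/-- A two-player extensive game (players indexed by `Bool`, the opponent of `i` being `!i`)
is strictly competitive if its strategic form is. -/
def StrictlyCompetitiveExt (G : ExtGame Bool) : Prop :=
  ∀ (i : Bool) (σ τ : ∀ j, G.Strategy j),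
    G.outcome σ i ≥ G.outcome τ i ↔ G.outcome σ (!i) ≤ G.outcome τ (!i)

/-- In the strategic form of the two-player game `G`, `t` weakly dominates `s`
(strategies of player `i`) in the game restricted to the strategy sets `A j`. -/
def WDomIn (G : ExtGame Bool) (A : ∀ j, Set (G.Strategy j)) (i : Bool)
    (t s : G.Strategy i) : Prop :=
  (∀ σ : ∀ j, G.Strategy j, σ (!i) ∈ A (!i) →
      G.outcome (Function.update σ i t) i ≥ G.outcome (Function.update σ i s) i) ∧
  (∃ σ : ∀ j, G.Strategy j, σ (!i) ∈ A (!i) ∧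
      G.outcome (Function.update σ i t) i > G.outcome (Function.update σ i s) i)

/-- One round of elimination of ALL weakly dominated strategies. -/
def elimAll (G : ExtGame Bool) (A : ∀ j, Set (G.Strategy j)) : ∀ j, Set (G.Strategy j) :=
  fun j => {s | s ∈ A j ∧ ¬ ∃ t ∈ A j, WDomIn G A j t s}

/-- `Γ^k(G)`: the strategy sets after `k` rounds of elimination of all weakly dominated
strategies from the strategic form of `G`. -/
def gamma (G : ExtGame Bool) : ℕ → ∀ j, Set (G.Strategy j)
  | 0 => fun _ => Set.univ
  | k + 1 => elimAll G (gamma G k)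

/-- `p_i^max(H)`: the maximal payoff player `i` can receive in the restricted game `A`. -/
noncomputable def pmax (G : ExtGame Bool) (A : ∀ j, Set (G.Strategy j)) (i : Bool) : ℝ :=
  sSup {x : ℝ | ∃ σ : ∀ j, G.Strategy j, (∀ j, σ j ∈ A j) ∧ x = G.outcome σ i}

/-- `win_i(H)`: the strategies of player `i` that always give him `p_i^max(H)` in the
restricted game `A`. -/
def winSet (G : ExtGame Bool) (A : ∀ j, Set (G.Strategy j)) (i : Bool) :
    Set (G.Strategy i) :=
  {si | si ∈ A i ∧ ∀ σ : ∀ j, G.Strategy j, σ (!i) ∈ A (!i) →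
    G.outcome (Function.update σ i si) i = pmax G A i}

/-- `lose_{-i}(H)`: the strategies of player `-i` against which player `i` can obtain
`p_i^max(H)` in the restricted game `A`. -/
def loseSet (G : ExtGame Bool) (A : ∀ j, Set (G.Strategy j)) (i : Bool) :
    Set (G.Strategy (!i)) :=
  {sb | sb ∈ A (!i) ∧ ∃ σ : ∀ j, G.Strategy j,
    σ i ∈ A i ∧ σ (!i) = sb ∧ G.outcome σ i = pmax G A i}


namespace EW

open ExtGame

/-- Combine a strategy of player `i` and one of player `!i` into a joint profile. -/
def prof : (i : Bool) → {G : ExtGame Bool} → G.Strategy i → G.Strategy (!i) → ∀ j, G.Strategy j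
  | true, _, s, c => fun j => match j with
    | true => s
    | false => c
  | false, _, s, c => fun j => match j with
    | true => c
    | false => s

@[simp] lemma prof_self (i : Bool) {G : ExtGame Bool} (s : G.Strategy i) (c : G.Strategy (!i)) :
    prof i s c i = s := by cases i <;> rfl

@[simp] lemma prof_not (i : Bool) {G : ExtGame Bool} (s : G.Strategy i) (c : G.Strategy (!i)) :
    prof i s c (!i) = c := by cases i <;> rfl

lemma bool_cases (i j : Bool) : j = i ∨ j = !i := by revert i j; decide

lemma eq_prof (i : Bool) {G : ExtGame Bool} (σ : ∀ j, G.Strategy j) :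
    σ = prof i (σ i) (σ (!i)) := by
  funext j; cases i <;> cases j <;> rfl

lemma update_self (i : Bool) {G : ExtGame Bool} (σ : ∀ j, G.Strategy j) (t : G.Strategy i) :
    Function.update σ i t = prof i t (σ (!i)) := by
  funext j; cases i <;> cases j <;> (first | rfl | simp [Function.update, prof])

lemma update_not (i : Bool) {G : ExtGame Bool} (σ : ∀ j, G.Strategy j) (d : G.Strategy (!i)) :
    Function.update σ (!i) d = prof i (σ i) d := by
  funext j; cases i <;> cases j <;> (first | rfl | simp [Function.update, prof])

/-- Payoff of player `i` when he plays `s` and the opponent plays `c`. -/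
def pay (i : Bool) {G : ExtGame Bool} (s : G.Strategy i) (c : G.Strategy (!i)) : ℝ :=
  G.outcome (prof i s c) i

/-- Payoff of the opponent of `i`. -/
def po (i : Bool) {G : ExtGame Bool} (s : G.Strategy i) (c : G.Strategy (!i)) : ℝ :=
  G.outcome (prof i s c) (!i)

lemma pay_leaf (i : Bool) (f : Bool → ℝ) (s : (ExtGame.leaf f).Strategy i)
    (c : (ExtGame.leaf f).Strategy (!i)) : pay i s c = f i := by cases i <;> rfl

lemma pay_node_mover (i : Bool) {m : ℕ} {ch : Fin (m+1) → ExtGame Bool}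
    (s : (ExtGame.node i m ch).Strategy i) (c : (ExtGame.node i m ch).Strategy (!i)) :
    pay i s c = pay i (s.2 (s.1 rfl)) (c.2 (s.1 rfl)) := by
  cases i
  · have h : pay false s c
        = ExtGame.outcome (ch (s.1 rfl)) (fun p => (prof false s c p).2 (s.1 rfl)) false := rfl
    rw [h]
    congr 1
    funext p; cases p <;> rfl
  · have h : pay true s c
        = ExtGame.outcome (ch (s.1 rfl)) (fun p => (prof true s c p).2 (s.1 rfl)) true := rfl
    rw [h]
    congr 1
    funext p; cases p <;> rfl

lemma pay_node_opp (i : Bool) {m : ℕ} {ch : Fin (m+1) → ExtGame Bool}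
    (s : (ExtGame.node (!i) m ch).Strategy i) (c : (ExtGame.node (!i) m ch).Strategy (!i)) :
    pay i s c = pay i (s.2 (c.1 rfl)) (c.2 (c.1 rfl)) := by
  cases i
  · have h : pay false s c
        = ExtGame.outcome (ch (c.1 rfl)) (fun p => (prof false s c p).2 (c.1 rfl)) false := rfl
    rw [h]
    congr 1
    funext p; cases p <;> rfl
  · have h : pay true s c
        = ExtGame.outcome (ch (c.1 rfl)) (fun p => (prof true s c p).2 (c.1 rfl)) true := rfl
    rw [h]
    congr 1
    funext p; cases p <;> rfl

/-- Strategy spaces are finite. -/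
lemma strategy_finite (p : Bool) : ∀ (G : ExtGame Bool), Finite (G.Strategy p) := by
  intro G
  induction G with
  | leaf f => exact inferInstanceAs (Finite PUnit.{1})
  | node j m ch IH =>
    haveI : ∀ c, Finite ((ch c).Strategy p) := IH
    exact inferInstanceAs (Finite ((p = j → Fin (m+1)) × ∀ c, (ch c).Strategy p))

/-- A default strategy. -/
def dstrat (p : Bool) : (G : ExtGame Bool) → G.Strategy p
  | .leaf _ => PUnit.unit
  | .node _ m ch => ⟨fun _ => (0 : Fin (m+1)), fun c => dstrat p (ch c)⟩


/-- Determinacy: either `i` can guarantee at least `M`, or the opponent can force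
the outcome strictly below `M`. -/
lemma determinacy (i : Bool) (M : ℝ) :
    ∀ (G : ExtGame Bool),
      (∃ s₀ : G.Strategy i, ∀ c, M ≤ pay i s₀ c) ∨
      (∃ t₀ : G.Strategy (!i), ∀ s, pay i s t₀ < M) := by
  intro G
  induction G with
  | leaf f =>
    by_cases h : M ≤ f i
    · exact Or.inl ⟨PUnit.unit, fun c => by erw [pay_leaf]; exact h⟩
    · exact Or.inr ⟨PUnit.unit, fun s => by erw [pay_leaf]; exact lt_of_not_ge h⟩
  | node j m ch IH =>
    rcases bool_cases i j with hj | hj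
    · subst hj
      -- player i (now renamed j) moves at the root
      by_cases hex : ∃ w : Fin (m+1), ∃ s₀ : (ch w).Strategy j, ∀ c, M ≤ pay j s₀ c
      · obtain ⟨w, s₀, h₀⟩ := hex
        refine Or.inl ⟨⟨fun _ => w, Function.update (fun w' => dstrat j (ch w')) w s₀⟩, ?_⟩
        intro c
        erw [pay_node_mover]
        simpa using h₀ (c.2 w)
      · push_neg at hex
        have hall : ∀ w : Fin (m+1), ∃ t₀ : (ch w).Strategy (!j), ∀ s, pay j s t₀ < M := by
          intro w
          rcases IH w with h | h
          · exact absurd h (by simpa using hex w)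
          · exact h
        choose t₀ ht₀ using hall
        refine Or.inr ⟨⟨fun _ => (0 : Fin (m+1)), t₀⟩, ?_⟩
        intro s
        erw [pay_node_mover]
        exact ht₀ _ _
    · subst hj
      -- the opponent moves at the root
      by_cases hex : ∃ w : Fin (m+1), ∃ t₀ : (ch w).Strategy (!i), ∀ s, pay i s t₀ < M
      · obtain ⟨w, t₀, h₀⟩ := hex
        refine Or.inr ⟨⟨fun _ => w, Function.update (fun w' => dstrat (!i) (ch w')) w t₀⟩, ?_⟩
        intro s
        erw [pay_node_opp]
        simpa using h₀ (s.2 w)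
      · push_neg at hex
        have hall : ∀ w : Fin (m+1), ∃ s₀ : (ch w).Strategy i, ∀ c, M ≤ pay i s₀ c := by
          intro w
          rcases IH w with h | h
          · exact h
          · exact absurd h (by simpa using hex w)
        choose s₀ hs₀ using hall
        refine Or.inl ⟨⟨fun _ => (0 : Fin (m+1)), s₀⟩, ?_⟩
        intro c
        erw [pay_node_opp]
        exact hs₀ _ _

/-- The key structural lemma about game trees. -/
lemma keyTree (i : Bool) (M : ℝ) :
    ∀ (G : ExtGame Bool) (sb : G.Strategy i) (b : G.Strategy (!i)), pay i sb b = M →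
      (∃ s₀ : G.Strategy i, ∀ c, M ≤ pay i s₀ c) ∨
      (∃ c₀ : G.Strategy (!i), pay i sb c₀ < M ∧ ∀ s : G.Strategy i,
        pay i s c₀ ≤ pay i s b ∨
        (pay i s c₀ < M ∧ ∃ d : G.Strategy i, M ≤ pay i d b ∧
          ∀ c, min M (pay i s c) ≤ pay i d c)) := by
  intro G
  induction G with
  | leaf f =>
    intro sb b hM
    left
    refine ⟨PUnit.unit, fun c => ?_⟩
    erw [pay_leaf]
    erw [pay_leaf] at hM
    exact hM.ge
  | node j' m ch IH =>
    intro sb b hM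
    rcases bool_cases i j' with hj | hj
    · subst hj
      -- i (renamed j') moves at the root; a := root choice of sb
      erw [pay_node_mover] at hM
      rcases IH (sb.1 rfl) (sb.2 (sb.1 rfl)) (b.2 (sb.1 rfl)) hM with ⟨s₀', h₀⟩ | ⟨c₀', hlt, hdisj⟩
      · left
        refine ⟨⟨fun _ => sb.1 rfl, Function.update sb.2 (sb.1 rfl) s₀'⟩, ?_⟩
        intro c
        erw [pay_node_mover]
        simpa using h₀ (c.2 (sb.1 rfl))
      · right
        refine ⟨⟨b.1, Function.update b.2 (sb.1 rfl) c₀'⟩, ?_, ?_⟩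
        · erw [pay_node_mover]
          simpa using hlt
        · intro s
          by_cases ha : s.1 rfl = sb.1 rfl
          · rcases hdisj (s.2 (sb.1 rfl)) with h | ⟨h1, d, hd1, hd2⟩
            · left
              erw [pay_node_mover, pay_node_mover, ha]
              simpa using h
            · right
              constructor
              · erw [pay_node_mover, ha]
                simpa using h1
              · refine ⟨⟨fun _ => sb.1 rfl, Function.update s.2 (sb.1 rfl) d⟩, ?_, ?_⟩
                · erw [pay_node_mover]
                  simpa using hd1
                · intro c
                  erw [pay_node_mover, pay_node_mover, ha]
                  simpa using hd2 (c.2 (sb.1 rfl))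
          · left
            erw [pay_node_mover, pay_node_mover]
            simp [Function.update_of_ne ha]
    · subst hj
      -- the opponent moves at the root; a := root choice of b
      erw [pay_node_opp] at hM
      rcases IH (b.1 rfl) (sb.2 (b.1 rfl)) (b.2 (b.1 rfl)) hM with hL | ⟨c₀', hlt, hdisj⟩
      · -- IH left at the root child: look at the other children
        by_cases hex : ∃ w : Fin (m+1), ∃ t₀ : (ch w).Strategy (!i), ∀ s, pay i s t₀ < M
        · -- some child has a uniform punisher: deviate there
          obtain ⟨w, t₀, h₀⟩ := hex
          obtain ⟨sA, hsA⟩ := hL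
          right
          refine ⟨⟨fun _ => w, Function.update b.2 w t₀⟩, ?_, ?_⟩
          · erw [pay_node_opp]
            simpa using h₀ (sb.2 w)
          · intro s
            right
            constructor
            · erw [pay_node_opp]
              simpa using h₀ (s.2 w)
            · refine ⟨⟨s.1, Function.update s.2 (b.1 rfl) sA⟩, ?_, ?_⟩
              · erw [pay_node_opp]
                simpa using hsA (b.2 (b.1 rfl))
              · intro c
                erw [pay_node_opp, pay_node_opp]
                by_cases hc : c.1 rfl = b.1 rfl
                · rw [hc]
                  simpa using le_trans (min_le_left _ _) (hsA (c.2 (b.1 rfl)))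
                · simp [Function.update_of_ne hc]
        · -- all children have a guarantee: global guarantee
          push_neg at hex
          have hall : ∀ w : Fin (m+1), ∃ s₀ : (ch w).Strategy i, ∀ c, M ≤ pay i s₀ c := by
            intro w
            rcases determinacy i M (ch w) with h | h
            · exact h
            · exact absurd h (by simpa using hex w)
          choose s₀ hs₀ using hall
          left
          refine ⟨⟨fun _ => (0 : Fin (m+1)), s₀⟩, ?_⟩
          intro c
          erw [pay_node_opp]
          exact hs₀ _ _
      · -- IH right at the root child: deeper deviation
        right
        refine ⟨⟨b.1, Function.update b.2 (b.1 rfl) c₀'⟩, ?_, ?_⟩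
        · erw [pay_node_opp]
          simpa using hlt
        · intro s
          rcases hdisj (s.2 (b.1 rfl)) with h | ⟨h1, d, hd1, hd2⟩
          · left
            erw [pay_node_opp, pay_node_opp]
            simpa using h
          · right
            constructor
            · erw [pay_node_opp]
              simpa using h1
            · refine ⟨⟨s.1, Function.update s.2 (b.1 rfl) d⟩, ?_, ?_⟩
              · erw [pay_node_opp]
                simpa using hd1
              · intro c
                erw [pay_node_opp, pay_node_opp]
                by_cases hc : c.1 rfl = b.1 rfl
                · rw [hc]
                  simpa using hd2 (c.2 (b.1 rfl))
                · simp [Function.update_of_ne hc]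


lemma gamma_succ_subset (G : ExtGame Bool) (r : ℕ) (p : Bool) :
    gamma G (r+1) p ⊆ gamma G r p := fun s hs => hs.1

lemma gamma_subset (G : ExtGame Bool) {r r' : ℕ} (h : r ≤ r') (p : Bool) :
    gamma G r' p ⊆ gamma G r p := by
  induction r' with
  | zero => simp_all
  | succ n IH =>
    rcases Nat.lt_or_ge r (n+1) with h' | h'
    · exact fun s hs => IH (by omega) (gamma_succ_subset G n p hs)
    · have : r = n + 1 := by omega
      subst this; exact fun s hs => hs

/-- One-step survival of pointwise-closed properties. -/
lemma lift_one (G : ExtGame Bool) (p : Bool) (r : ℕ) (P : G.Strategy p → Prop)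
    (hcl : ∀ s t, s ∈ gamma G r p → t ∈ gamma G r p → P s → WDomIn G (gamma G r) p t s → P t)
    (hne : ∃ s ∈ gamma G r p, P s) : ∃ s ∈ gamma G (r+1) p, P s := by
  classical
  haveI : ∀ q (H : ExtGame Bool), Finite (H.Strategy q) := fun q H => strategy_finite q H
  obtain ⟨s₀, hs₀, hP₀⟩ := hne
  set X : Set (G.Strategy p) := {s | s ∈ gamma G r p ∧ P s} with hX
  have hXfin : X.Finite := Set.toFinite X
  have hXne : X.Nonempty := ⟨s₀, hs₀, hP₀⟩
  set T : Finset (G.Strategy (!p)) := (Set.toFinite (gamma G r (!p))).toFinset with hT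
  set F : G.Strategy p → ℝ := fun s => ∑ c ∈ T, G.outcome (prof p s c) p with hF
  obtain ⟨s, hsX, hmax⟩ := Set.Finite.exists_maximalFor F X hXfin hXne
  refine ⟨s, ⟨hsX.1, ?_⟩, hsX.2⟩
  rintro ⟨t, htA, hdom⟩
  have hPt : P t := hcl s t hsX.1 htA hsX.2 hdom
  have hFlt : F s < F t := by
    apply Finset.sum_lt_sum
    · intro c hc
      have hcA : c ∈ gamma G r (!p) := by
        rw [hT, Set.Finite.mem_toFinset] at hc; exact hc
      have h1 := hdom.1 (prof p s c) (by simpa using hcA)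
      rw [update_self, update_self] at h1
      simpa using h1
    · obtain ⟨σ, hσA, hσlt⟩ := hdom.2
      refine ⟨σ (!p), by rw [hT, Set.Finite.mem_toFinset]; exact hσA, ?_⟩
      rw [update_self, update_self] at hσlt
      exact hσlt
  exact absurd (hmax ⟨htA, hPt⟩ hFlt.le) (not_le.mpr hFlt)

/-- Multi-step survival of pointwise-closed properties. -/
lemma lift_many (G : ExtGame Bool) (p : Bool) (r : ℕ) (P : G.Strategy p → Prop) :
    ∀ n : ℕ,
    (∀ r', r ≤ r' → r' < r + n → ∀ s t, s ∈ gamma G r' p → t ∈ gamma G r' p → P s →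
      WDomIn G (gamma G r') p t s → P t) →
    (∃ s ∈ gamma G r p, P s) → ∃ s ∈ gamma G (r + n) p, P s := by
  intro n
  induction n with
  | zero => exact fun _ h => h
  | succ n IH =>
    intro hcl hne
    have h' := IH (fun r' h1 h2 => hcl r' h1 (by omega)) hne
    have := lift_one G p (r+n) P (hcl (r+n) (by omega) (by omega)) h'
    simpa [← Nat.add_assoc] using this

end EW

/-- Lemma (Ewerhart): in a finite strictly competitive extensive game, for every player `i`
and every `k ≥ 0`, if `win_i(Γ^k(G)) = ∅` then `lose_{-i}(Γ^k(G)) ∩ Γ^{k+2}_{-i}(G) = ∅`. -/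
theorem lose_eliminated_of_no_win (G : ExtGame Bool) (hsc : StrictlyCompetitiveExt G)
    (i : Bool) (k : ℕ) (hwin : winSet G (gamma G k) i = ∅) :
    loseSet G (gamma G k) i ∩ gamma G (k + 2) (!i) = ∅ := by
  classical
  haveI : ∀ j : Bool, Finite (G.Strategy j) := fun j => EW.strategy_finite j G
  rw [Set.eq_empty_iff_forall_notMem]
  intro b hb
  obtain ⟨hbl, hb2⟩ := hb
  obtain ⟨hbA, σw, hσwi, hσwo, hσweq⟩ := hbl
  set M := pmax G (gamma G k) i with hMdef
  -- strict competitiveness bridges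
  have scW : ∀ (s : G.Strategy i) (c d : G.Strategy (!i)),
      EW.pay i s c ≤ EW.pay i s d ↔ EW.po i s d ≤ EW.po i s c :=
    fun s c d => hsc i (EW.prof i s d) (EW.prof i s c)
  have scS : ∀ (s : G.Strategy i) (c d : G.Strategy (!i)),
      EW.pay i s c < EW.pay i s d ↔ EW.po i s d < EW.po i s c := by
    intro s c d
    rw [lt_iff_not_ge, lt_iff_not_ge]
    exact not_congr (scW s d c)
  -- M is an upper bound for payoffs of surviving pairs
  have hprofmem : ∀ (s : G.Strategy i) (c : G.Strategy (!i)), s ∈ gamma G k i →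
      c ∈ gamma G k (!i) → ∀ j, EW.prof i s c j ∈ gamma G k j := by
    intro s c hs hc j
    rcases EW.bool_cases i j with h | h
    · rw [h]; simpa using hs
    · rw [h]; simpa using hc
  have hSfin : Set.Finite
      {x : ℝ | ∃ σ : ∀ j, G.Strategy j, (∀ j, σ j ∈ gamma G k j) ∧ x = G.outcome σ i} := by
    apply Set.Finite.subset (Set.toFinite ((fun σ : ∀ j, G.Strategy j => G.outcome σ i) '' Set.univ))
    rintro x ⟨σ, _, rfl⟩
    exact ⟨σ, trivial, rfl⟩
  have hMax : ∀ (s : G.Strategy i) (c : G.Strategy (!i)), s ∈ gamma G k i →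
      c ∈ gamma G k (!i) → EW.pay i s c ≤ M := by
    intro s c hs hc
    rw [hMdef]
    exact le_csSup hSfin.bddAbove ⟨EW.prof i s c, hprofmem s c hs hc, rfl⟩
  -- memberships of b
  have hb1 : b ∈ gamma G (k+1) (!i) := hb2.1
  have hb0 : b ∈ gamma G k (!i) := hb1.1
  -- the witness strategy achieving M against b
  have hwpay : EW.pay i (σw i) b = M := by
    have h1 : EW.prof i (σw i) b = σw := by
      conv_rhs => rw [EW.eq_prof i σw, hσwo]
    show G.outcome (EW.prof i (σw i) b) i = M
    rw [h1]
    exact hσweq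
  -- a surviving strategy achieving M against b
  obtain ⟨sbar, hsbar1, hsbarge⟩ :
      ∃ s ∈ gamma G (k+1) i, M ≤ EW.pay i s b := by
    apply EW.lift_one G i k
    · intro s t hs ht hPs hdom
      have h1 := hdom.1 (EW.prof i s b) (by simpa using hb0)
      rw [EW.update_self, EW.update_self] at h1
      simp at h1
      exact le_trans hPs h1
    · exact ⟨σw i, hσwi, hwpay.ge⟩
  have hsbarA : sbar ∈ gamma G k i := hsbar1.1
  have hsbarpay : EW.pay i sbar b = M := le_antisymm (hMax sbar b hsbarA hb0) hsbarge
  -- the key dichotomy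
  rcases EW.keyTree i M G sbar b hsbarpay with ⟨s₀, h₀⟩ | ⟨c₀, hc₀lt, hdisj⟩
  · -- a guaranteeing strategy survives to round k: contradiction with winSet = ∅
    obtain ⟨sw, hswk, hswP⟩ :
        ∃ s ∈ gamma G (0 + k) i, ∀ c ∈ gamma G k (!i), M ≤ EW.pay i s c := by
      apply EW.lift_many
      · intro r' hr1 hr2 s t hs ht hPs hdom c hcA
        have hcr : c ∈ gamma G r' (!i) := EW.gamma_subset G (by omega) (!i) hcA
        have hge := hdom.1 (EW.prof i s c) (by simpa using hcr)
        rw [EW.update_self, EW.update_self] at hge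
        simp at hge
        exact le_trans (hPs c hcA) hge
      · exact ⟨s₀, Set.mem_univ s₀, fun c _ => h₀ c⟩
    rw [Nat.zero_add] at hswk
    have hmem : sw ∈ winSet G (gamma G k) i := by
      refine ⟨hswk, ?_⟩
      intro σ hσ
      rw [EW.update_self, ← hMdef]
      exact le_antisymm (hMax _ _ hswk hσ) (hswP _ hσ)
    rw [hwin] at hmem
    exact hmem
  · -- pointwise comparison against all survivors of round k+1
    have hpoint : ∀ s ∈ gamma G (k+1) i, EW.pay i s c₀ ≤ EW.pay i s b := by
      intro s hs
      rcases hdisj s with h | ⟨hlt, d, hdb, hdc⟩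
      · exact h
      · obtain ⟨dw, hdwk, hdwb, hdwc⟩ :
            ∃ x ∈ gamma G (0 + (k+1)) i, M ≤ EW.pay i x b ∧
              ∀ c ∈ gamma G k (!i), min M (EW.pay i s c) ≤ EW.pay i x c := by
          apply EW.lift_many
          · intro r' hr1 hr2 x t hx ht hPx hdom
            have hbr : b ∈ gamma G r' (!i) := EW.gamma_subset G (by omega) (!i) hb1
            constructor
            · have hge := hdom.1 (EW.prof i x b) (by simpa using hbr)
              rw [EW.update_self, EW.update_self] at hge
              simp at hge
              exact le_trans hPx.1 hge
            · intro c hcA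
              have hcr : c ∈ gamma G r' (!i) := EW.gamma_subset G (by omega) (!i) hcA
              have hge := hdom.1 (EW.prof i x c) (by simpa using hcr)
              rw [EW.update_self, EW.update_self] at hge
              simp at hge
              exact le_trans (hPx.2 c hcA) hge
          · exact ⟨d, Set.mem_univ d, hdb, fun c _ => hdc c⟩
        rw [Nat.zero_add] at hdwk
        have hsbM : M ≤ EW.pay i s b := by
          by_contra hltb
          push_neg at hltb
          have hdomw : WDomIn G (gamma G k) i dw s := by
            constructor
            · intro σ hσ
              rw [EW.update_self, EW.update_self]
              have h1 : EW.pay i s (σ (!i)) ≤ M := hMax _ _ hs.1 hσ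
              have h2 := hdwc (σ (!i)) hσ
              rw [min_eq_right h1] at h2
              exact h2
            · refine ⟨EW.prof i s b, by simpa using hb0, ?_⟩
              rw [EW.update_self, EW.update_self]
              simp
              exact lt_of_lt_of_le hltb hdwb
          exact hs.2 ⟨dw, hdwk.1, hdomw⟩
        exact le_trans hlt.le hsbM
    -- lift c₀ to a surviving dominator of b at round k+1
    obtain ⟨cb, hcbk, hcb1, hcb2⟩ :
        ∃ c ∈ gamma G (0 + (k+1)) (!i),
          (∀ s ∈ gamma G (k+1) i, EW.pay i s c ≤ EW.pay i s b) ∧ EW.pay i sbar c < M := by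
      apply EW.lift_many
      · intro r' hr1 hr2 x t hx ht hPx hdom
        have key : ∀ s ∈ gamma G (k+1) i, EW.pay i s t ≤ EW.pay i s x := by
          intro s hs
          have hsr : s ∈ gamma G r' i := EW.gamma_subset G (by omega) i hs
          have hmem : EW.prof i s x (!(!i)) ∈ gamma G r' (!(!i)) := by
            rw [Bool.not_not]; simpa using hsr
          have hge := hdom.1 (EW.prof i s x) hmem
          rw [EW.update_not, EW.update_not] at hge
          simp at hge
          exact (scW s t x).mpr hge
        constructor
        · intro s hs
          exact le_trans (key s hs) (hPx.1 s hs)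
        · exact lt_of_le_of_lt (key sbar hsbar1) hPx.2
      · exact ⟨c₀, Set.mem_univ c₀, hpoint, hc₀lt⟩
    rw [Nat.zero_add] at hcbk
    have hdomb : WDomIn G (gamma G (k+1)) (!i) cb b := by
      constructor
      · intro σ hσ
        rw [Bool.not_not] at hσ
        rw [EW.update_not, EW.update_not]
        exact (scW (σ i) cb b).mp (hcb1 (σ i) hσ)
      · refine ⟨EW.prof i sbar b, ?_, ?_⟩
        · have : EW.prof i sbar b (!(!i)) ∈ gamma G (k+1) (!(!i)) := by
            rw [Bool.not_not]; simpa using hsbar1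
          exact this
        · rw [EW.update_not, EW.update_not]
          simp
          exact (scS sbar cb b).mp (lt_of_lt_of_le hcb2 hsbarge)
    exact hb2.2 ⟨cb, hcbk, hdomb⟩
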